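/- The Thue–Morse sequence contains no overlap, i.e., no factor of the form a·z·a·z·a where a is a single letter and z is a (possibly empty) binary word. -/

import Mathlib

/-- `L` is a factor of the infinite word `w : ℕ → Bool`. -/
def IsFactorOf (w : Nat → Bool) (L : List Bool) : Prop :=
  ∃ k, L = (List.range L.length).map (fun j => w (k + j))

/-- The Thue–Morse sequence as a function `ℕ → Bool`. -/
def thueMorse (i : Nat) : Bool := decide ((Nat.digits 2 i).sum % 2 = 1)

lemma tm_even (n : Nat) : thueMorse (2*n) = thueMorse n := by
  rcases Nat.eq_zero_or_pos n with h | h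
  · simp [h]
  · unfold thueMorse
    rw [Nat.digits_def' (by norm_num) (by omega)]
    simp [Nat.mul_div_cancel_left _ (by norm_num : 0 < 2), Nat.mul_mod_right]

lemma tm_odd (n : Nat) : thueMorse (2*n+1) = ! thueMorse n := by
  unfold thueMorse
  rw [Nat.digits_def' (by norm_num) (by omega)]
  have h1 : (2*n+1) % 2 = 1 := by omega
  have h2 : (2*n+1) / 2 = n := by omega
  rw [h1, h2]
  simp only [List.sum_cons]
  by_cases h : (Nat.digits 2 n).sum % 2 = 1
  · simp [h]; exact decide_eq_false (by omega)
  · simp [h]; exact decide_eq_true (by omega)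

lemma no_three (n : Nat) : ¬(thueMorse n = thueMorse (n+1) ∧ thueMorse (n+1) = thueMorse (n+2)) := by
  rintro ⟨h1, h2⟩
  rcases Nat.even_or_odd n with ⟨v, hv⟩ | ⟨v, hv⟩
  · rw [show n = 2*v by omega, show 2*v+1 = 2*v+1 from rfl] at h1
    rw [tm_even, tm_odd] at h1
    simp at h1
  · rw [show n+1 = 2*(v+1) by omega, show n+2 = 2*(v+1)+1 by omega] at h2
    rw [tm_even, tm_odd] at h2
    simp at h2

lemma tm_key : ∀ p, 1 ≤ p → ∀ k, ¬ (∀ i ≤ p, thueMorse (k+i) = thueMorse (k+p+i)) := by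
  intro p
  induction p using Nat.strong_induction_on with
  | _ p IH =>
    intro hp k H
    rcases Nat.even_or_odd p with ⟨q, hq⟩ | ⟨s, hs⟩
    · -- p = 2q even
      have hq1 : 1 ≤ q := by omega
      apply IH q (by omega) hq1 (k / 2)
      intro i hi
      have h := H (2*i) (by omega)
      rcases Nat.even_or_odd k with ⟨u, hu⟩ | ⟨u, hu⟩
      · rw [show k + 2*i = 2*(u+i) by omega, show k + p + 2*i = 2*(u+q+i) by omega,
          tm_even, tm_even] at h
        rw [show k/2 + i = u + i by omega, show k/2 + q + i = u + q + i by omega]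
        exact h
      · rw [show k + 2*i = 2*(u+i)+1 by omega, show k + p + 2*i = 2*(u+q+i)+1 by omega,
          tm_odd, tm_odd] at h
        rw [show k/2 + i = u + i by omega, show k/2 + q + i = u + q + i by omega]
        simpa using h
    · -- p = 2s+1 odd
      rcases Nat.eq_zero_or_pos s with h0 | h0
      · -- p = 1
        have h1 := H 0 (by omega)
        have h2 := H 1 (by omega)
        rw [show k+0 = k by omega, show k+p+0 = k+1 by omega] at h1
        rw [show k+p+1 = k+2 by omega] at h2
        exact no_three k ⟨h1, h2⟩
      rcases Nat.even_or_odd k with ⟨u, hu⟩ | ⟨u, hu⟩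
      · -- k even, s ≥ 1
        have e0 := H 0 (by omega)
        have e1 := H 1 (by omega)
        have e2 := H 2 (by omega)
        have e3 := H 3 (by omega)
        rw [show k+0 = 2*u by omega, show k+p+0 = 2*(u+s)+1 by omega, tm_even, tm_odd] at e0
        rw [show k+1 = 2*u+1 by omega, show k+p+1 = 2*(u+s+1) by omega, tm_odd, tm_even] at e1
        rw [show k+2 = 2*(u+1) by omega, show k+p+2 = 2*(u+s+1)+1 by omega, tm_even, tm_odd] at e2
        rw [show k+3 = 2*(u+1)+1 by omega, show k+p+3 = 2*(u+s+2) by omega, tm_odd, tm_even] at e3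
        clear H IH hp hs hu h0
        apply no_three (u+s)
        refine ⟨?_, ?_⟩ <;>
          cases h : thueMorse u <;> cases h2 : thueMorse (u+1) <;>
            simp_all [show u+s+1+1 = u+s+2 by omega]
      · -- k odd
        rcases Nat.lt_or_ge s 2 with hs2 | hs2
        · -- s = 1, p = 3
          have e1 := H 1 (by omega)
          have e2 := H 2 (by omega)
          have e3 := H 3 (by omega)
          rw [show k+1 = 2*(u+1) by omega, show k+p+1 = 2*(u+2)+1 by omega, tm_even, tm_odd] at e1
          rw [show k+2 = 2*(u+1)+1 by omega, show k+p+2 = 2*(u+3) by omega, tm_odd, tm_even] at e2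
          rw [show k+3 = 2*(u+2) by omega, show k+p+3 = 2*(u+3)+1 by omega, tm_even, tm_odd] at e3
          clear H IH
          cases h : thueMorse (u+1) <;> cases h2 : thueMorse (u+2) <;> simp_all
        · -- s ≥ 2
          have e1 := H 1 (by omega)
          have e2 := H 2 (by omega)
          have e3 := H 3 (by omega)
          have e4 := H 4 (by omega)
          rw [show k+1 = 2*(u+1) by omega, show k+p+1 = 2*(u+s+1)+1 by omega, tm_even, tm_odd] at e1
          rw [show k+2 = 2*(u+1)+1 by omega, show k+p+2 = 2*(u+s+2) by omega, tm_odd, tm_even] at e2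
          rw [show k+3 = 2*(u+2) by omega, show k+p+3 = 2*(u+s+2)+1 by omega, tm_even, tm_odd] at e3
          rw [show k+4 = 2*(u+2)+1 by omega, show k+p+4 = 2*(u+s+3) by omega, tm_odd, tm_even] at e4
          clear H IH hp hs hu h0 hs2
          apply no_three (u+s+1)
          refine ⟨?_, ?_⟩ <;>
            cases h : thueMorse (u+1) <;> cases h2 : thueMorse (u+2) <;>
              simp_all [show u+s+1+1 = u+s+2 by omega, show u+s+1+2 = u+s+3 by omega]

lemma map_range_inj {α} (f g : ℕ → α) (p : ℕ)
    (h : (List.range p).map f = (List.range p).map g) : ∀ i < p, f i = g i := by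
  intro i hi
  have h2 := congrArg (fun l => l[i]?) h
  simpa [List.getElem?_map, List.getElem?_range hi] using h2

theorem stmt19 (a : Bool) (z : List Bool) :
    ¬ IsFactorOf thueMorse ([a] ++ z ++ [a] ++ z ++ [a]) := by
  rintro ⟨k, hk⟩
  set p := z.length + 1 with hp
  set f : ℕ → Bool := fun j => thueMorse (k + j) with hf
  have hlen : ([a] ++ z ++ [a] ++ z ++ [a]).length = p + (p + 1) := by
    simp [hp]; omega
  rw [hlen, List.range_add, List.map_append, List.map_map] at hk
  have hk' : (a :: z) ++ ((a :: z) ++ [a]) =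
      (List.range p).map f ++ (List.range (p+1)).map (fun j => f (p + j)) := by
    simpa [Function.comp_def] using hk
  obtain ⟨h1, h2⟩ := List.append_inj hk' (by simp [hp])
  rw [List.range_succ, List.map_append] at h2
  obtain ⟨h3, h4⟩ := List.append_inj h2 (by simp [hp])
  simp only [List.map_cons, List.map_nil, List.cons.injEq] at h4
  -- h4 : a = f (p + p)
  have hpt : ∀ i < p, f i = f (p + i) := map_range_inj _ _ _ (h1.symm.trans h3)
  have hfp : f p = a := by
    have h5 := congrArg (fun l => l[0]?) h3
    simpa [List.getElem?_map, List.getElem?_range (show 0 < p by omega)] using h5.symm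
  apply tm_key p (by omega) k
  intro i hi
  rcases Nat.lt_or_ge i p with hip | hip
  · have := hpt i hip
    simpa [hf, show k + (p + i) = k + p + i by omega] using this
  · have hip' : i = p := by omega
    subst hip'
    have : f p = f (p + p) := hfp.trans h4.1
    simpa [hf, show k + (p + p) = k + p + p by omega] using this
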